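/- For 1 ≤ k ≤ n, the subgroup of k-decomposable braids in the pure braid group P_n (those q ∈ P_n with φ_S(q) = 1 for every subset S ⊆ N of cardinality k) is generated by the set of monic commutators x whose support σ(x) has cardinality at least n − k + 1. -/

import Mathlib

/-!
Common setup: the pure braid group `P_n` as a presented group, the subgroups
`P_S` and `Q_S`, the characterization of the homomorphisms `φ_S`, the support
`σ(x)`, and monic commutators.
-/

/-- The free-group generator corresponding to the pure braid generator
`p_{a,b}` for `a < b` (indices in `Fin n`, so strand `i+1` of `{1,…,n}`
corresponds to `i : Fin n`). -/
def pf {n : ℕ} (a b : Fin n) (h : a < b) :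
    FreeGroup {q : Fin n × Fin n // q.1 < q.2} :=
  FreeGroup.of ⟨(a, b), h⟩

/-- The defining relations (A), (B), (C) of the pure braid group `P_n`,
each written in the form `lhs⁻¹ * rhs` for an equation `lhs = rhs`. -/
def braidRels (n : ℕ) : Set (FreeGroup {q : Fin n × Fin n // q.1 < q.2}) :=
  -- (A) first equality: p_{a,b} p_{a,c} p_{b,c} = p_{a,c} p_{b,c} p_{a,b}
  {r | ∃ (a b c : Fin n) (hab : a < b) (hbc : b < c),
      r = (pf a b hab * pf a c (hab.trans hbc) * pf b c hbc)⁻¹ *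
          (pf a c (hab.trans hbc) * pf b c hbc * pf a b hab)} ∪
  -- (A) second equality: p_{a,b} p_{a,c} p_{b,c} = p_{b,c} p_{a,b} p_{a,c}
  {r | ∃ (a b c : Fin n) (hab : a < b) (hbc : b < c),
      r = (pf a b hab * pf a c (hab.trans hbc) * pf b c hbc)⁻¹ *
          (pf b c hbc * pf a b hab * pf a c (hab.trans hbc))} ∪
  -- (B) first: p_{a,b} p_{c,d} = p_{c,d} p_{a,b}
  {r | ∃ (a b c d : Fin n) (hab : a < b) (hbc : b < c) (hcd : c < d),
      r = (pf a b hab * pf c d hcd)⁻¹ * (pf c d hcd * pf a b hab)} ∪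
  -- (B) second: p_{a,d} p_{b,c} = p_{b,c} p_{a,d}
  {r | ∃ (a b c d : Fin n) (hab : a < b) (hbc : b < c) (hcd : c < d),
      r = (pf a d (hab.trans (hbc.trans hcd)) * pf b c hbc)⁻¹ *
          (pf b c hbc * pf a d (hab.trans (hbc.trans hcd)))} ∪
  -- (C): p_{a,c} (p_{b,c}⁻¹ p_{b,d} p_{b,c}) = (p_{b,c}⁻¹ p_{b,d} p_{b,c}) p_{a,c}
  {r | ∃ (a b c d : Fin n) (hab : a < b) (hbc : b < c) (hcd : c < d),
      r = (pf a c (hab.trans hbc) * ((pf b c hbc)⁻¹ * pf b d (hbc.trans hcd) * pf b c hbc))⁻¹ *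
          ((pf b c hbc)⁻¹ * pf b d (hbc.trans hcd) * pf b c hbc * pf a c (hab.trans hbc))}

/-- The pure braid group `P_n`, given by the presentation above. -/
abbrev PB (n : ℕ) := PresentedGroup (braidRels n)

/-- The generator `p_{a,b}` of the pure braid group, for `a < b`. -/
def p {n : ℕ} (a b : Fin n) (h : a < b) : PB n := PresentedGroup.of ⟨(a, b), h⟩

/-- `P_S`: the subgroup of `P_n` generated by all `p_{a,b}` with `a ∈ S` and `b ∈ S`. -/
def PS {n : ℕ} (S : Set (Fin n)) : Subgroup (PB n) :=
  Subgroup.closure {x | ∃ (a b : Fin n) (h : a < b), a ∈ S ∧ b ∈ S ∧ x = p a b h}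

/-- `Q_S`: the subgroup of `P_n` generated by all `p_{a,b}` with `a ∈ S` or `b ∈ S`. -/
def QS {n : ℕ} (S : Set (Fin n)) : Subgroup (PB n) :=
  Subgroup.closure {x | ∃ (a b : Fin n) (h : a < b), (a ∈ S ∨ b ∈ S) ∧ x = p a b h}

/-- `IsPhi S φ` says that `φ : P_n → P_n` is the homomorphism `φ_S`, i.e. it sends
`p_{a,b}` to itself if `a ∉ S` and `b ∉ S`, and to `1` otherwise. -/
def IsPhi {n : ℕ} (S : Set (Fin n)) (φ : PB n →* PB n) : Prop :=
  ∀ (a b : Fin n) (h : a < b),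
    (a ∉ S ∧ b ∉ S → φ (p a b h) = p a b h) ∧ ((a ∈ S ∨ b ∈ S) → φ (p a b h) = 1)

/-- The support `σ(x)` of `x ∈ P_n`: the intersection of all `S` with `x ∈ P_S`. -/
def support {n : ℕ} (x : PB n) : Set (Fin n) := ⋂₀ {S | x ∈ PS S}

/-- Monic commutators: the smallest set of elements of `P_n` containing all
`p_{a,b}` and `p_{a,b}⁻¹` and closed under taking nontrivial commutators
`[x,y] = x⁻¹ y⁻¹ x y`. -/
inductive IsMonic {n : ℕ} : PB n → Prop
  | of (a b : Fin n) (h : a < b) : IsMonic (p a b h)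
  | inv (a b : Fin n) (h : a < b) : IsMonic (p a b h)⁻¹
  | comm (x y : PB n) : IsMonic x → IsMonic y → x⁻¹ * y⁻¹ * x * y ≠ 1 →
      IsMonic (x⁻¹ * y⁻¹ * x * y)

namespace BraidAux

open Subgroup

variable {n : ℕ}

lemma mk_rel {r : FreeGroup {q : Fin n × Fin n // q.1 < q.2}} (hr : r ∈ braidRels n) :
    (PresentedGroup.mk (braidRels n) r : PB n) = 1 :=
  (QuotientGroup.eq_one_iff r).mpr (Subgroup.subset_normalClosure hr)

lemma mk_pf {a b : Fin n} (h : a < b) :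
    (PresentedGroup.mk (braidRels n) (pf a b h) : PB n) = p a b h := rfl

lemma eq_of_rel {w w' : FreeGroup {q : Fin n × Fin n // q.1 < q.2}}
    (hr : w⁻¹ * w' ∈ braidRels n) :
    (PresentedGroup.mk (braidRels n) w : PB n) = PresentedGroup.mk (braidRels n) w' := by
  have h := mk_rel hr
  rw [map_mul, map_inv, inv_mul_eq_one] at h
  exact h

lemma relA1 {a b c : Fin n} (hab : a < b) (hbc : b < c) :
    p a b hab * p a c (hab.trans hbc) * p b c hbc
      = p a c (hab.trans hbc) * p b c hbc * p a b hab := by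
  have h := eq_of_rel (n := n)
    (Or.inl (Or.inl (Or.inl (Or.inl ⟨a, b, c, hab, hbc, rfl⟩))))
  simpa [map_mul, mk_pf] using h

lemma relA2 {a b c : Fin n} (hab : a < b) (hbc : b < c) :
    p a b hab * p a c (hab.trans hbc) * p b c hbc
      = p b c hbc * p a b hab * p a c (hab.trans hbc) := by
  have h := eq_of_rel (n := n)
    (Or.inl (Or.inl (Or.inl (Or.inr ⟨a, b, c, hab, hbc, rfl⟩))))
  simpa [map_mul, mk_pf] using h

lemma relB1 {a b c d : Fin n} (hab : a < b) (hbc : b < c) (hcd : c < d) :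
    p a b hab * p c d hcd = p c d hcd * p a b hab := by
  have h := eq_of_rel (n := n)
    (Or.inl (Or.inl (Or.inr ⟨a, b, c, d, hab, hbc, hcd, rfl⟩)))
  simpa [map_mul, mk_pf] using h

lemma relB2 {a b c d : Fin n} (hab : a < b) (hbc : b < c) (hcd : c < d) :
    p a d (hab.trans (hbc.trans hcd)) * p b c hbc
      = p b c hbc * p a d (hab.trans (hbc.trans hcd)) := by
  have h := eq_of_rel (n := n)
    (Or.inl (Or.inr ⟨a, b, c, d, hab, hbc, hcd, rfl⟩))
  simpa [map_mul, mk_pf] using h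

lemma relC {a b c d : Fin n} (hab : a < b) (hbc : b < c) (hcd : c < d) :
    p a c (hab.trans hbc) * ((p b c hbc)⁻¹ * p b d (hbc.trans hcd) * p b c hbc)
      = (p b c hbc)⁻¹ * p b d (hbc.trans hcd) * p b c hbc * p a c (hab.trans hbc) := by
  have h := eq_of_rel (n := n)
    (Or.inr ⟨a, b, c, d, hab, hbc, hcd, rfl⟩)
  simpa [map_mul, map_inv, mk_pf] using h

end BraidAux
namespace BraidAux

open Classical in
/-- the value function for `φ_S`. -/
noncomputable def phiFun (S : Set (Fin n)) : {q : Fin n × Fin n // q.1 < q.2} → PB n :=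
  fun x => if x.1.1 ∈ S ∨ x.1.2 ∈ S then 1 else p x.1.1 x.1.2 x.2

lemma phiFun_rels (S : Set (Fin n)) : ∀ r ∈ braidRels n, FreeGroup.lift (phiFun S) r = 1 := by
  classical
  rintro r (((((⟨a,b,c,hab,hbc,rfl⟩|⟨a,b,c,hab,hbc,rfl⟩)|⟨a,b,c,d,hab,hbc,hcd,rfl⟩)|
    ⟨a,b,c,d,hab,hbc,hcd,rfl⟩)|⟨a,b,c,d,hab,hbc,hcd,rfl⟩)) <;>
  · simp only [pf, map_mul, map_inv, FreeGroup.lift_apply_of, phiFun]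
    split_ifs <;>
      first
        | (rw [inv_mul_eq_one]; first
            | exact relA1 hab hbc
            | exact relA2 hab hbc
            | exact relB1 hab hbc hcd
            | exact relB2 hab hbc hcd
            | exact relC hab hbc hcd)
        | tauto
        | group

end BraidAux
namespace BraidAux

/-- The homomorphism `φ_S`. -/
noncomputable def phi (S : Set (Fin n)) : PB n →* PB n :=
  PresentedGroup.toGroup (phiFun_rels S)

lemma isPhi_phi (S : Set (Fin n)) : IsPhi S (phi S) := by
  classical
  intro a b h
  have : phi S (p a b h) = phiFun S ⟨(a, b), h⟩ := PresentedGroup.toGroup.of _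
  constructor
  · rintro ⟨ha, hb⟩
    rw [this]
    simp only [phiFun]
    rw [if_neg (by tauto)]
  · intro hab
    rw [this]
    simp only [phiFun]
    rw [if_pos hab]

/-- the indicator character killing all generators except `j0`. -/
noncomputable def chi (j0 : {q : Fin n × Fin n // q.1 < q.2}) : PB n →* Multiplicative ℤ := by
  classical
  exact PresentedGroup.toGroup (f := fun j => if j.1 = j0.1 then Multiplicative.ofAdd (1 : ℤ) else 1)
    (by
      rintro r (((((⟨a,b,c,hab,hbc,rfl⟩|⟨a,b,c,hab,hbc,rfl⟩)|⟨a,b,c,d,hab,hbc,hcd,rfl⟩)|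
        ⟨a,b,c,d,hab,hbc,hcd,rfl⟩)|⟨a,b,c,d,hab,hbc,hcd,rfl⟩)) <;>
      · simp only [pf, map_mul, map_inv, FreeGroup.lift_apply_of]
        rw [inv_mul_eq_one]
        split_ifs <;> simp [mul_comm, mul_left_comm, mul_assoc])

lemma chi_p {a b : Fin n} (h : a < b) (j0 : {q : Fin n × Fin n // q.1 < q.2}) :
    chi j0 (p a b h) = if (a, b) = j0.1 then Multiplicative.ofAdd (1 : ℤ) else 1 := by
  classical
  exact PresentedGroup.toGroup.of _

end BraidAux
namespace BraidAux

variable {S T : Set (Fin n)} {φ : PB n →* PB n} {x y : PB n}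

lemma monic_dichotomy (hx : IsMonic x) (hφ : IsPhi S φ) : φ x = x ∨ φ x = 1 := by
  classical
  induction hx with
  | of a b h =>
    by_cases hab : a ∈ S ∨ b ∈ S
    · exact Or.inr ((hφ a b h).2 hab)
    · exact Or.inl ((hφ a b h).1 (by tauto))
  | inv a b h =>
    by_cases hab : a ∈ S ∨ b ∈ S
    · right; rw [map_inv, (hφ a b h).2 hab]; simp
    · left; rw [map_inv, (hφ a b h).1 (by tauto)]
  | comm x y hx hy hne ihx ihy =>
    rcases ihx with h1 | h1 <;> rcases ihy with h2 | h2 <;>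
      simp [map_mul, map_inv, h1, h2]

lemma range_le (hφ : IsPhi S φ) : φ.range ≤ PS Sᶜ := by
  rw [MonoidHom.range_eq_map, ← PresentedGroup.closure_range_of (braidRels n),
    MonoidHom.map_closure]
  refine Subgroup.closure_le _ |>.mpr ?_
  rintro - ⟨-, ⟨j, rfl⟩, rfl⟩
  obtain ⟨⟨a, b⟩, h⟩ := j
  by_cases hab : a ∈ S ∨ b ∈ S
  · rw [show PresentedGroup.of (rels := braidRels n) ⟨(a,b),h⟩ = p a b h from rfl,
      (hφ a b h).2 hab]
    exact Subgroup.one_mem _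
  · rw [show PresentedGroup.of (rels := braidRels n) ⟨(a,b),h⟩ = p a b h from rfl,
      (hφ a b h).1 (by tauto)]
    exact Subgroup.subset_closure ⟨a, b, h, by tauto, by tauto, rfl⟩

lemma fix_of_mem_PS (hφ : IsPhi Tᶜ φ) (hx : x ∈ PS T) : φ x = x := by
  have : PS T ≤ MonoidHom.eqLocus φ (MonoidHom.id _) := by
    refine Subgroup.closure_le _ |>.mpr ?_
    rintro - ⟨a, b, h, ha, hb, rfl⟩
    exact (hφ a b h).1 ⟨by simpa using ha, by simpa using hb⟩
  exact this hx

lemma support_subset_of_mem (hx : x ∈ PS T) : support x ⊆ T :=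
  Set.sInter_subset_of_mem hx

lemma mem_of_p_mem {a b : Fin n} (h : a < b) (hx : p a b h ∈ PS T) : a ∈ T ∧ b ∈ T := by
  classical
  by_contra hc
  have hker : ∀ z ∈ PS T, chi ⟨(a, b), h⟩ z = 1 := by
    intro z hz
    have : PS T ≤ (chi (n := n) ⟨(a, b), h⟩).ker := by
      refine Subgroup.closure_le _ |>.mpr ?_
      rintro - ⟨c, d, hcd, hc', hd', rfl⟩
      have : (c, d) ≠ (a, b) := by
        rintro heq
        obtain ⟨rfl, rfl⟩ := Prod.mk.injEq .. ▸ heq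
        exact hc ⟨hc', hd'⟩
      simp [MonoidHom.mem_ker, chi_p, this]
    exact this hz
  have h1 : chi (n := n) ⟨(a, b), h⟩ (p a b h) = Multiplicative.ofAdd (1 : ℤ) := by
    simp [chi_p]
  have h2 := hker _ hx
  rw [h1] at h2
  have h3 : (1 : ℤ) = 0 := congrArg Multiplicative.toAdd h2
  exact one_ne_zero h3

lemma support_p {a b : Fin n} (h : a < b) : support (p a b h) = {a, b} := by
  apply subset_antisymm
  · exact support_subset_of_mem (Subgroup.subset_closure ⟨a, b, h, by simp, by simp, rfl⟩)
  · intro z hz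
    rw [support, Set.mem_sInter]
    intro T hT
    obtain ⟨ha, hb⟩ := mem_of_p_mem h hT
    rcases hz with rfl | hz
    · exact ha
    · simpa [Set.mem_singleton_iff.mp hz] using hb

lemma isMonic_inv (hx : IsMonic x) : IsMonic x⁻¹ := by
  induction hx with
  | of a b h => exact IsMonic.inv a b h
  | inv a b h => simpa using IsMonic.of a b h
  | comm x y hx hy hne _ _ =>
    have key : (x⁻¹ * y⁻¹ * x * y)⁻¹ = y⁻¹ * x⁻¹ * y * x := by group
    rw [key]
    refine IsMonic.comm y x hy hx fun h2 => hne ?_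
    rw [← key] at h2
    exact inv_eq_one.mp h2

lemma support_inv (x : PB n) : support x⁻¹ = support x := by
  have h : {S : Set (Fin n) | x⁻¹ ∈ PS S} = {S | x ∈ PS S} := by
    ext T
    simp only [Set.mem_setOf_eq]
    constructor
    · intro hT; simpa using inv_mem hT
    · intro hT; exact inv_mem hT
  unfold support
  rw [h]

lemma support_comm (hx : IsMonic x) (hy : IsMonic y) (hne : x⁻¹ * y⁻¹ * x * y ≠ 1) :
    support x ∪ support y ⊆ support (x⁻¹ * y⁻¹ * x * y) := by
  intro z hz
  rw [support, Set.mem_sInter]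
  intro T hT
  have hφ := isPhi_phi (n := n) Tᶜ
  have hfix : phi Tᶜ (x⁻¹ * y⁻¹ * x * y) = x⁻¹ * y⁻¹ * x * y := fix_of_mem_PS hφ hT
  have hxx : phi Tᶜ x = x := by
    rcases monic_dichotomy hx hφ with h1 | h1
    · exact h1
    · exfalso; apply hne
      rcases monic_dichotomy hy hφ with h2 | h2 <;>
        · rw [← hfix]; simp [map_mul, map_inv, h1, h2]
  have hyy : phi Tᶜ y = y := by
    rcases monic_dichotomy hy hφ with h2 | h2
    · exact h2
    · exfalso; apply hne; rw [← hfix]; simp [map_mul, map_inv, h2]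
  have hsx : support x ⊆ T := by
    have : x ∈ PS Tᶜᶜ := range_le hφ ⟨x, hxx⟩
    rw [compl_compl] at this
    exact support_subset_of_mem this
  have hsy : support y ⊆ T := by
    have : y ∈ PS Tᶜᶜ := range_le hφ ⟨y, hyy⟩
    rw [compl_compl] at this
    exact support_subset_of_mem this
  rcases hz with hz | hz
  · exact hsx hz
  · exact hsy hz

lemma monic_fix (hx : IsMonic x) (hφ : IsPhi S φ) (hd : ∀ a ∈ support x, a ∉ S) :
    φ x = x := by
  induction hx with
  | of a b h =>
    refine (hφ a b h).1 ⟨hd a ?_, hd b ?_⟩ <;> simp [support_p]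
  | inv a b h =>
    have hd' : ∀ z ∈ support (p a b h), z ∉ S := by
      rw [← support_inv]; exact hd
    rw [map_inv, (hφ a b h).1 ⟨hd' a (by simp [support_p]), hd' b (by simp [support_p])⟩]
  | comm x y hxm hym hne ihx ihy =>
    have hsub := support_comm hxm hym hne
    have h1 : φ x = x := ihx fun a ha => hd a (hsub (Or.inl ha))
    have h2 : φ y = y := ihy fun a ha => hd a (hsub (Or.inr ha))
    simp [map_mul, map_inv, h1, h2]

lemma monic_kill (hx : IsMonic x) (hφ : IsPhi S φ) (hns : ¬ support x ⊆ Sᶜ) : φ x = 1 := by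
  rcases monic_dichotomy hx hφ with h1 | h1
  · exact absurd (support_subset_of_mem (range_le hφ ⟨x, h1⟩)) hns
  · exact h1

end BraidAux
namespace BraidAux

/-- The subgroup generated by monic commutators of support cardinality `≥ m+1`. -/
def bigH (n m : ℕ) : Subgroup (PB n) :=
  Subgroup.closure {x : PB n | IsMonic x ∧ m + 1 ≤ (support x).ncard}

lemma conj_mem_bigH {m : ℕ} {g : PB n} (hg : IsMonic g) :
    ∀ x ∈ bigH n m, g * x * g⁻¹ ∈ bigH n m := by
  intro x hx
  have hmap : (bigH n m).map (MulAut.conj g).toMonoidHom ≤ bigH n m := by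
    rw [bigH, MonoidHom.map_closure]
    refine Subgroup.closure_le _ |>.mpr ?_
    rintro - ⟨y, ⟨hym, hyc⟩, rfl⟩
    simp only [MulEquiv.coe_toMonoidHom, MulAut.conj_apply]
    set c := y⁻¹ * (g⁻¹)⁻¹ * y * g⁻¹ with hc
    have key : g * y * g⁻¹ = y * c := by rw [hc]; group
    rw [key]
    by_cases h1 : c = 1
    · rw [h1, mul_one]
      exact Subgroup.subset_closure ⟨hym, hyc⟩
    · refine mul_mem (Subgroup.subset_closure ⟨hym, hyc⟩) (Subgroup.subset_closure ⟨?_, ?_⟩)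
      · exact IsMonic.comm y g⁻¹ hym (isMonic_inv hg) h1
      · refine le_trans hyc (Set.ncard_le_ncard ?_ (Set.toFinite _))
        exact fun z hz => support_comm hym (isMonic_inv hg) h1 (Or.inl hz)
  exact hmap ⟨x, hx, rfl⟩

instance bigH_normal (m : ℕ) : (bigH n m).Normal := by
  rw [← Subgroup.normalizer_eq_top_iff]
  rw [Subgroup.eq_top_iff']
  intro g
  refine PresentedGroup.generated_by _ _ (fun j => ?_) g
  obtain ⟨⟨a, b⟩, h⟩ := j
  have hm : IsMonic (p a b h) := IsMonic.of a b h
  rw [show (PresentedGroup.of (rels := braidRels n) ⟨(a, b), h⟩) = p a b h from rfl]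
  rw [Subgroup.mem_normalizer_iff]
  intro x
  constructor
  · intro hx
    exact conj_mem_bigH hm x hx
  · intro hx
    have h2 := conj_mem_bigH (isMonic_inv hm) _ hx
    have e : (p a b h)⁻¹ * (p a b h * x * (p a b h)⁻¹) * ((p a b h)⁻¹)⁻¹ = x := by group
    rwa [e] at h2

lemma phi_maps_bigH {m : ℕ} {S : Set (Fin n)} {φ : PB n →* PB n} (hφ : IsPhi S φ) :
    ∀ x ∈ bigH n m, φ x ∈ bigH n m := by
  intro x hx
  have hmap : (bigH n m).map φ ≤ bigH n m := by
    rw [bigH, MonoidHom.map_closure]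
    refine Subgroup.closure_le _ |>.mpr ?_
    rintro - ⟨y, ⟨hym, hyc⟩, rfl⟩
    rcases monic_dichotomy hym hφ with h1 | h1 <;> rw [h1]
    · exact Subgroup.subset_closure ⟨hym, hyc⟩
    · exact one_mem _
  exact hmap ⟨x, hx, rfl⟩

/-- `φ_S` descends to the quotient by `bigH n m`. -/
noncomputable def phibar (S : Set (Fin n)) (m : ℕ) :
    PB n ⧸ bigH n m →* PB n ⧸ bigH n m :=
  QuotientGroup.lift (bigH n m) ((QuotientGroup.mk' (bigH n m)).comp (phi S))
    (fun x hx => by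
      exact (QuotientGroup.eq_one_iff _).mpr (phi_maps_bigH (isPhi_phi S) x hx))

lemma phibar_mk (S : Set (Fin n)) (m : ℕ) (x : PB n) :
    phibar S m (QuotientGroup.mk x) = QuotientGroup.mk (phi S x) := rfl

lemma phi_comp {S S'' : Set (Fin n)} {φ ψ : PB n →* PB n} (hφ : IsPhi S φ)
    (hψ : IsPhi S'' ψ) (hsub : S'' ⊆ S) : φ.comp ψ = φ := by
  classical
  refine PresentedGroup.ext fun j => ?_
  obtain ⟨⟨a, b⟩, h⟩ := j
  have hofp : (PresentedGroup.of (rels := braidRels n) ⟨(a, b), h⟩) = p a b h := rfl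
  rw [MonoidHom.comp_apply, hofp]
  by_cases hab : a ∈ S'' ∨ b ∈ S''
  · rw [(hψ a b h).2 hab, map_one, (hφ a b h).2 (by tauto)]
  · rw [(hψ a b h).1 (by tauto)]

lemma commute_closure {M : Type*} [Group M] {s t : Set M}
    (h : ∀ x ∈ s, ∀ y ∈ t, Commute x y) :
    ∀ x ∈ Subgroup.closure s, ∀ y ∈ Subgroup.closure t, Commute x y := by
  intro x hx
  refine Subgroup.closure_induction (p := fun x _ => ∀ y ∈ Subgroup.closure t, Commute x y)
    (fun x hxs => ?_) (fun y _ => Commute.one_left y)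
    (fun a b _ _ ha hb y hy => (ha y hy).mul_left (hb y hy))
    (fun a _ ha y hy => (ha y hy).inv_left) hx
  intro y hy
  exact Subgroup.closure_induction (p := fun y _ => Commute x y)
    (fun y hyt => h x hxs y hyt) (Commute.one_right x)
    (fun a b _ _ ha hb => ha.mul_right hb) (fun a _ ha => ha.inv_right) hy

lemma noncommProd_eq_single {ι M : Type*} [Monoid M] [DecidableEq ι] (t : ι) (f : ι → M) :
    ∀ (s : Finset ι) (comm : (↑s : Set ι).Pairwise fun a b => Commute (f a) (f b)),
      (∀ i ∈ s, i ≠ t → f i = 1) →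
        s.noncommProd f comm = if t ∈ s then f t else 1 := by
  intro s
  induction s using Finset.induction_on with
  | empty => intro comm h; simp
  | @insert a s' ha ih =>
    intro comm h
    have hsub : (↑s' : Set ι) ⊆ ↑(insert a s') :=
      Finset.coe_subset.mpr (Finset.subset_insert a s')
    rw [Finset.noncommProd_insert_of_notMem _ _ _ _ ha]
    by_cases hat : a = t
    · subst hat
      rw [ih (comm.mono hsub) (fun i hi hit => h i (Finset.mem_insert_of_mem hi) hit)]
      rw [if_neg ha, mul_one, if_pos (Finset.mem_insert_self a _)]
    · rw [h a (Finset.mem_insert_self a s') hat, one_mul,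
        ih (comm.mono hsub) (fun i hi hit => h i (Finset.mem_insert_of_mem hi) hit)]
      simp [Finset.mem_insert, Ne.symm hat]

end BraidAux
namespace BraidAux

lemma commute_of_comm_eq_one {M : Type*} [Group M] {x y : M} (h : x⁻¹ * y⁻¹ * x * y = 1) :
    Commute x y := by
  have h2 := congrArg (fun z => y * x * z) h
  simpa [mul_assoc, Commute, SemiconjBy] using h2

lemma main_ind : ∀ m : ℕ, m ≤ n → ∀ q : PB n,
    (∀ S : Set (Fin n), S.ncard = n - m → ∀ φ : PB n →* PB n, IsPhi S φ → φ q = 1) →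
    q ∈ bigH n m := by
  intro m
  induction m with
  | zero =>
    intro _ q _
    refine PresentedGroup.generated_by _ _ (fun j => ?_) q
    obtain ⟨⟨a, b⟩, h⟩ := j
    rw [show (PresentedGroup.of (rels := braidRels n) ⟨(a, b), h⟩) = p a b h from rfl]
    refine Subgroup.subset_closure ⟨IsMonic.of a b h, ?_⟩
    rw [support_p]
    exact (Set.ncard_pos (Set.toFinite _)).mpr ⟨a, by simp⟩
  | succ m ih =>
    intro hmn q hq
    classical
    -- q is also (n - m)-decomposable
    have hq' : ∀ S : Set (Fin n), S.ncard = n - m → ∀ φ : PB n →* PB n, IsPhi S φ → φ q = 1 := by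
      intro S hS φ hφ
      obtain ⟨S'', hsub, hS''⟩ :=
        Set.exists_subset_card_eq (s := S) (n := n - (m + 1)) (by omega)
      have h1 : phi S'' q = 1 := hq S'' hS'' (phi S'') (isPhi_phi S'')
      calc φ q = (φ.comp (phi S'')) q := by
                rw [phi_comp hφ (isPhi_phi S'') hsub]
           _ = φ (phi S'' q) := rfl
           _ = 1 := by rw [h1, map_one]
    have hqm : q ∈ bigH n m := ih (by omega) q hq'
    -- pass to the quotient by N = bigH n (m+1)
    set N := bigH n (m + 1) with hN
    let mk : PB n →* PB n ⧸ N := QuotientGroup.mk' N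
    let Gt : Finset (Fin n) → Subgroup (PB n ⧸ N) := fun T =>
      Subgroup.closure (mk '' {x | IsMonic x ∧ support x = ↑T ∧ T.card = m + 1})
    -- commutation between different supports
    have hcomm : Pairwise fun T T' : Finset (Fin n) =>
        ∀ x y : PB n ⧸ N, x ∈ Gt T → y ∈ Gt T' → Commute x y := by
      intro T T' hTT'
      intro u v hu hv
      refine commute_closure ?_ u hu v hv
      rintro - ⟨x, ⟨hxm, hxs, hxc⟩, rfl⟩ - ⟨y, ⟨hym, hys, hyc⟩, rfl⟩
      have hmkc : mk (x⁻¹ * y⁻¹ * x * y) = 1 := by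
        by_cases hc : x⁻¹ * y⁻¹ * x * y = 1
        · rw [hc, map_one]
        · refine (QuotientGroup.eq_one_iff _).mpr ?_
          refine Subgroup.subset_closure ⟨IsMonic.comm x y hxm hym hc, ?_⟩
          have hsupp : (↑T ∪ ↑T' : Set (Fin n)) ⊆ support (x⁻¹ * y⁻¹ * x * y) := by
            rw [← hxs, ← hys]
            exact support_comm hxm hym hc
          have hcard : m + 2 ≤ ((↑T ∪ ↑T' : Set (Fin n))).ncard := by
            rw [← Finset.coe_union, Set.ncard_coe_finset]
            have h1 : T ⊆ T ∪ T' := Finset.subset_union_left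
            have h2 : T ≠ T ∪ T' := by
              intro heq
              have : T' ⊆ T := heq ▸ Finset.subset_union_right
              exact hTT' (Finset.eq_of_subset_of_card_le this (by omega)).symm
            have := Finset.card_lt_card (Finset.ssubset_iff_subset_ne.mpr ⟨h1, h2⟩)
            omega
          calc m + 1 + 1 = m + 2 := by omega
            _ ≤ ((↑T ∪ ↑T' : Set (Fin n))).ncard := hcard
            _ ≤ (support (x⁻¹ * y⁻¹ * x * y)).ncard :=
                Set.ncard_le_ncard hsupp (Set.toFinite _)
      refine commute_of_comm_eq_one ?_
      simpa [map_mul, map_inv] using hmkc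
    -- mk q lies in the supremum of the Gt
    have hqsup : mk q ∈ ⨆ T : Finset (Fin n), Gt T := by
      have h1 : mk q ∈ (bigH n m).map mk := ⟨q, hqm, rfl⟩
      rw [bigH, MonoidHom.map_closure] at h1
      refine Subgroup.closure_le _ |>.mpr ?_ h1
      rintro - ⟨x, ⟨hxm, hxc⟩, rfl⟩
      by_cases hbig : m + 2 ≤ (support x).ncard
      · have : mk x = 1 := (QuotientGroup.eq_one_iff _).mpr
          (Subgroup.subset_closure ⟨hxm, by omega⟩)
        rw [this]
        exact one_mem _
      · have hcard : (support x).ncard = m + 1 := by omega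
        set T : Finset (Fin n) := (Set.toFinite (support x)).toFinset with hT
        have hcoe : (↑T : Set (Fin n)) = support x := Set.Finite.coe_toFinset _
        have hTcard : T.card = m + 1 := by
          rw [hT, ← Set.ncard_eq_toFinset_card _ (Set.toFinite (support x))]
          exact hcard
        refine le_iSup Gt T ?_
        exact Subgroup.subset_closure ⟨x, ⟨hxm, hcoe.symm, hTcard⟩, rfl⟩
      -- each Gt T' ≤ ⨆ handled above
    rw [← Subgroup.noncommPiCoprod_range (hcomm := hcomm)] at hqsup
    obtain ⟨f, hf⟩ := hqsup
    -- for every T, the component is trivial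
    have hcomp : ∀ T : Finset (Fin n), (f T : PB n ⧸ N) = 1 := by
      intro T
      by_cases hTcard : T.card = m + 1
      · -- use φ_S with S = (↑T)ᶜ
        set S : Set (Fin n) := (↑T : Set (Fin n))ᶜ with hS
        have hScard : S.ncard = n - (m + 1) := by
          have h1 := Set.ncard_add_ncard_compl (↑T : Set (Fin n))
          rw [Set.ncard_coe_finset] at h1
          have h2 : Nat.card (Fin n) = n := by simp
          rw [hS]
          omega
        have hq1 : phi S q = 1 := hq S hScard (phi S) (isPhi_phi S)
        have hbar1 : phibar S (m + 1) (mk q) = 1 := by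
          show phibar S (m + 1) (QuotientGroup.mk q) = 1
          rw [phibar_mk, hq1]
          rfl
        -- kernel and fixed-point behaviour of phibar on the Gt
        have hker : ∀ T' : Finset (Fin n), T' ≠ T →
            ∀ z ∈ Gt T', phibar S (m + 1) z = 1 := by
          intro T' hne z hz
          have hle : Gt T' ≤ (phibar S (m + 1)).ker := by
            refine Subgroup.closure_le _ |>.mpr ?_
            rintro - ⟨x, ⟨hxm, hxs, hxc⟩, rfl⟩
            have hkill : phi S x = 1 := by
              refine monic_kill hxm (isPhi_phi S) ?_
              rw [hS, compl_compl, hxs]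
              intro hsub
              have hsub' : T' ⊆ T := Finset.coe_subset.mp hsub
              exact hne (Finset.eq_of_subset_of_card_le hsub' (by omega))
            have : phibar S (m + 1) (QuotientGroup.mk x) = 1 := by
              rw [phibar_mk, hkill]; rfl
            exact this
          exact hle hz
        have hfix : ∀ z ∈ Gt T, phibar S (m + 1) z = z := by
          intro z hz
          have hle : Gt T ≤ MonoidHom.eqLocus (phibar S (m + 1)) (MonoidHom.id _) := by
            refine Subgroup.closure_le _ |>.mpr ?_
            rintro - ⟨x, ⟨hxm, hxs, hxc⟩, rfl⟩
            have hfixx : phi S x = x := by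
              refine monic_fix hxm (isPhi_phi S) ?_
              intro a ha
              rw [hxs] at ha
              rw [hS]
              simp only [Set.mem_compl_iff, not_not]
              exact ha
            show phibar S (m + 1) (QuotientGroup.mk x) = QuotientGroup.mk x
            rw [phibar_mk, hfixx]
          exact hle hz
        -- compute phibar of the big product
        have hexp : phibar S (m + 1) (Subgroup.noncommPiCoprod hcomm f) = (f T : PB n ⧸ N) := by
          rw [Subgroup.noncommPiCoprod_apply]
          refine (Finset.map_noncommProd _ _ _ (phibar S (m + 1))).trans ?_
          refine (noncommProd_eq_single T _ Finset.univ _ ?_).trans ?_; swap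
          · rw [if_pos (Finset.mem_univ T)]
            exact hfix _ (f T).2
          · intro T' _ hne
            exact hker T' hne _ (f T').2
        rw [hf, hbar1] at hexp
        exact hexp.symm
      · -- Gt T is trivial
        have hbot : Gt T = ⊥ := by
          have : {x : PB n | IsMonic x ∧ support x = ↑T ∧ T.card = m + 1} = ∅ := by
            ext x; simp [hTcard]
          simp [Gt, this]
        exact Subgroup.mem_bot.mp (hbot.le (f T).2)
    -- conclude q ∈ N
    have hone : mk q = 1 := by
      rw [← hf, Subgroup.noncommPiCoprod_apply]
      refine (Finset.noncommProd_eq_pow_card _ _ _ 1 ?_).trans (one_pow _)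
      intro T _
      exact hcomp T
    exact (QuotientGroup.eq_one_iff _).mp hone

end BraidAux

/-- Corollary 2.2: the subgroup of `k`-decomposable braids is
generated by the monic commutators whose support has cardinality at least
`n - k + 1`. -/
theorem k_decomposable (n k : ℕ) (hk : 1 ≤ k) (hkn : k ≤ n) (q : PB n) :
    q ∈ Subgroup.closure
        {x : PB n | IsMonic x ∧ n - k + 1 ≤ (support x).ncard} ↔
      ∀ S : Set (Fin n), S.ncard = k →
        ∀ φ : PB n →* PB n, IsPhi S φ → φ q = 1 := by
  constructor
  · intro hq S hS φ hφ
    refine Subgroup.closure_induction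
      (p := fun x _ => φ x = 1) ?_ (map_one φ) ?_ ?_ hq
    · rintro x ⟨hxm, hxc⟩
      refine BraidAux.monic_kill hxm hφ ?_
      intro hsub
      have h1 : (support x).ncard ≤ Sᶜ.ncard :=
        Set.ncard_le_ncard hsub (Set.toFinite _)
      have h2 := Set.ncard_add_ncard_compl S
      have h3 : Nat.card (Fin n) = n := by simp
      omega
    · intro x y _ _ hx hy
      rw [map_mul, hx, hy, mul_one]
    · intro x _ hx
      rw [map_inv, hx, inv_one]
  · intro hq
    refine BraidAux.main_ind (n - k) (by omega) q ?_
    intro S hS φ hφ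
    exact hq S (by omega) φ hφ
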